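/- Let d ≥ 3 and χ be integers with 1 − g(d) ≤ χ ≤ g(d) − 1. For each integer χ′ let k(χ′) and r(χ′) be the unique integers with χ′ + d(d−3)/2 = k(χ′)·d + r(χ′) and 0 ≤ r(χ′) < d. Then β(d, χ) = β(d, g(d)−1) − #{χ′ : χ ≤ χ′ ≤ g(d) − 2 and k(χ′) + r(χ′) ≥ d − 2}. -/

import Mathlib

open Finset

/-- A spectrum of type `(d, χ)`: a nonincreasing `d`-tuple of integers with
entry sum `χ - d`. -/
def IsSpectrum (d : ℕ) (χ : ℤ) (a : Fin d → ℤ) : Prop :=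
  Antitone a ∧ ∑ i, a i = χ - (d : ℤ)

/-- Balanced: consecutive entries drop by at most 1. -/
def IsBalanced {d : ℕ} (a : Fin d → ℤ) : Prop :=
  ∀ (i : Fin d) (h : (i : ℕ) + 1 < d), a i - a ⟨(i : ℕ) + 1, h⟩ ≤ 1

/-- `h⁰` of a spectrum: `Σ_{a_i ≥ 0} (a_i + 1)`. -/
def h0 {d : ℕ} (a : Fin d → ℤ) : ℤ :=
  ∑ i, if 0 ≤ a i then a i + 1 else 0

/-- Arithmetic genus of a degree `d` plane curve: `(d-1)(d-2)/2`. -/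
def gd (d : ℤ) : ℤ := (d - 1) * (d - 2) / 2

/-- The quotient `k(χ)` in `χ + d(d-3)/2 = k d + r`, `0 ≤ r < d`. -/
def kk (d χ : ℤ) : ℤ := (χ + d * (d - 3) / 2) / d

/-- The remainder `r(χ)` in `χ + d(d-3)/2 = k d + r`, `0 ≤ r < d`. -/
def rr (d χ : ℤ) : ℤ := (χ + d * (d - 3) / 2) % d

/-- The sharp bound `β(d,χ) = (k+2)(k+1)/2 + max(0, k - d + r + 2)`. -/
def betaB (d χ : ℤ) : ℤ :=
  (kk d χ + 2) * (kk d χ + 1) / 2 + max 0 (kk d χ - d + rr d χ + 2)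

lemma two_m_eq (d : ℤ) : 2 * (d * (d - 3) / 2) = d * (d - 3) := by
  apply Int.mul_ediv_cancel'
  rcases Int.even_or_odd d with ⟨t, ht⟩ | ⟨t, ht⟩
  · exact ⟨t * (d - 3), by rw [ht]; ring⟩
  · exact ⟨d * (t - 1), by rw [ht]; ring⟩

lemma two_gd_eq (d : ℤ) : 2 * gd d = d * (d - 3) + 2 := by
  unfold gd
  have : 2 * ((d - 1) * (d - 2) / 2) = (d - 1) * (d - 2) := by
    apply Int.mul_ediv_cancel'
    rcases Int.even_or_odd d with ⟨t, ht⟩ | ⟨t, ht⟩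
    · exact ⟨(d - 1) * (t - 1), by rw [ht]; ring⟩
    · exact ⟨t * (d - 2), by rw [ht]; ring⟩
  rw [this]; ring

lemma betaB_step (d χ : ℤ) (hd : 3 ≤ d) (h1 : 1 - gd d ≤ χ) (h2 : χ ≤ gd d - 2) :
    betaB d (χ + 1) = betaB d χ + (if d - 2 ≤ kk d χ + rr d χ then 1 else 0) := by
  have hm := two_m_eq d
  have hg := two_gd_eq d
  have hd0 : (0 : ℤ) < d := by omega
  set m := d * (d - 3) / 2 with hmdef
  set n := χ + m with hn
  have hkr : n / d = kk d χ ∧ n % d = rr d χ := ⟨rfl, rfl⟩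
  set k := kk d χ with hkk
  set r := rr d χ with hrr
  have hdecomp : r + d * k = n ∧ 0 ≤ r ∧ r < d :=
    (Int.ediv_emod_unique hd0).mp hkr
  have hn0 : 0 ≤ n := by omega
  have hnub : n ≤ d * (d - 3) - 1 := by omega
  have hk0 : 0 ≤ k := Int.ediv_nonneg hn0 (le_of_lt hd0)
  by_cases hcase : r = d - 1
  · -- wrap-around case
    have hkub : k ≤ d - 4 := by
      have h1 : k * d ≤ (d - 4) * d := by nlinarith [hdecomp.1]
      exact le_of_mul_le_mul_right h1 hd0
    have hnew : (n + 1) / d = k + 1 ∧ (n + 1) % d = 0 := by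
      rw [Int.ediv_emod_unique hd0]
      refine ⟨?_, le_refl _, hd0⟩
      have := hdecomp.1
      nlinarith
    have hk1 : kk d (χ + 1) = k + 1 := by
      show (χ + 1 + m) / d = k + 1
      have : χ + 1 + m = n + 1 := by omega
      rw [this]; exact hnew.1
    have hr1 : rr d (χ + 1) = 0 := by
      show (χ + 1 + m) % d = 0
      have : χ + 1 + m = n + 1 := by omega
      rw [this]; exact hnew.2
    have hcond : d - 2 ≤ k + r := by omega
    rw [if_pos hcond]
    unfold betaB
    rw [hk1, hr1, ← hkk, ← hrr]
    have e1 : (k + 1 + 2) * (k + 1 + 1) = (k + 2) * (k + 1) + (2 * k + 4) := by ring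
    have e2 : (k + 2) * (k + 1) % 2 = 0 := by
      have : Even ((k + 1) * ((k + 1) + 1)) := Int.even_mul_succ_self (k + 1)
      have h' : (k + 2) * (k + 1) = (k + 1) * ((k + 1) + 1) := by ring
      rw [h', Int.even_iff] at *
      exact this
    omega
  · -- same-quotient case
    have hnew : (n + 1) / d = k ∧ (n + 1) % d = r + 1 := by
      rw [Int.ediv_emod_unique hd0]
      exact ⟨by omega, by omega, by omega⟩
    have hk1 : kk d (χ + 1) = k := by
      show (χ + 1 + m) / d = k
      have : χ + 1 + m = n + 1 := by omega
      rw [this]; exact hnew.1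
    have hr1 : rr d (χ + 1) = r + 1 := by
      show (χ + 1 + m) % d = r + 1
      have : χ + 1 + m = n + 1 := by omega
      rw [this]; exact hnew.2
    unfold betaB
    rw [hk1, hr1, ← hkk, ← hrr]
    split_ifs <;> omega

/-- the difference formula
`β(d,χ) = β(d, g-1) - #{χ' : χ ≤ χ' ≤ g - 2, k(χ') + r(χ') ≥ d - 2}`. -/
theorem stmt_12 (d χ : ℤ) (hd : 3 ≤ d)
    (h1 : 1 - gd d ≤ χ) (h2 : χ ≤ gd d - 1) :
    betaB d χ = betaB d (gd d - 1) -
      (((Finset.Icc χ (gd d - 2)).filter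
        (fun χ' => d - 2 ≤ kk d χ' + rr d χ')).card : ℤ) := by
  refine Int.le_induction_down (motive := fun c _ => 1 - gd d ≤ c →
      betaB d c = betaB d (gd d - 1) -
        (((Finset.Icc c (gd d - 2)).filter
          (fun χ' => d - 2 ≤ kk d χ' + rr d χ')).card : ℤ)) ?_ ?_ χ h2 h1
  · intro _
    have : Finset.Icc (gd d - 1) (gd d - 2) = ∅ := by
      apply Finset.Icc_eq_empty; omega
    rw [this]
    simp
  · intro n hn ih hne'
    by_cases hne : 1 - gd d ≤ n
    · have ihn := ih hne
      have hstep := betaB_step d (n - 1) hd (by omega) (by omega)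
      have hset : Finset.Icc (n - 1) (gd d - 2) =
          insert (n - 1) (Finset.Icc n (gd d - 2)) := by
        ext x
        simp only [Finset.mem_Icc, Finset.mem_insert]
        omega
      have hnotmem : n - 1 ∉ Finset.Icc n (gd d - 2) := by
        simp only [Finset.mem_Icc]; omega
      rw [hset, Finset.filter_insert]
      by_cases hcond : d - 2 ≤ kk d (n - 1) + rr d (n - 1)
      · rw [if_pos hcond] at *
        rw [Finset.card_insert_of_notMem (fun h => hnotmem (Finset.mem_of_mem_filter _ h))]
        have : n - 1 + 1 = n := by ring
        rw [this] at hstep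
        push_cast
        omega
      · rw [if_neg hcond] at *
        have : n - 1 + 1 = n := by ring
        rw [this] at hstep
        omega
    · omega
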